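/- arXiv:2509.16448 — 2 statements merged into one kernel-verified Lean document; each statement's English description precedes it below -/
import Mathlib

section
/- Let n and k be integers with 2 ≤ k and 2k ≤ n. Then the domination number of the k-token graph of the complete graph satisfies (1/k²)·C(n, k−1) < γ(F_k(K_n)) ≤ (1/k)·C(n, k−1), where C(n, k−1) denotes the binomial coefficient n choose k−1. -/
/-- The `k`-token graph of a simple graph `G`: vertices are the `k`-element
subsets of `V(G)`, and two subsets are adjacent when their symmetric difference
is a pair `{u, v}` of adjacent vertices of `G`. -/
def tokenGraph {V : Type*} [DecidableEq V] (G : SimpleGraph V) (k : ℕ) :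
    SimpleGraph {A : Finset V // A.card = k} where
  Adj A B := ∃ u v : V, G.Adj u v ∧ symmDiff A.1 B.1 = {u, v}
  symm := by
    constructor
    rintro A B ⟨u, v, huv, h⟩
    exact ⟨u, v, huv, by rwa [symmDiff_comm]⟩
  loopless := by
    constructor
    rintro A ⟨u, v, huv, h⟩
    rw [symmDiff_self] at h
    have : u ∈ (⊥ : Finset V) := h ▸ Finset.mem_insert_self u {v}
    simp at this

/-- A dominating set: every vertex is in `D` or adjacent to a vertex of `D`. -/
def IsDominatingSet {V : Type*} (G : SimpleGraph V) (D : Set V) : Prop :=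
  ∀ v : V, v ∈ D ∨ ∃ u ∈ D, G.Adj u v

/-- The domination number: minimum cardinality of a dominating set. -/
noncomputable def dominationNumber {V : Type*} [Fintype V] (G : SimpleGraph V) : ℕ :=
  sInf {m : ℕ | ∃ D : Finset V, IsDominatingSet G ↑D ∧ D.card = m}

/-- The star graph `S n` with vertex set `{0, 1, …, n}`, center `0` adjacent to
each leaf `1, …, n`. -/
def starGraph (n : ℕ) : SimpleGraph (Fin (n + 1)) where
  Adj u v := u ≠ v ∧ (u = 0 ∨ v = 0)
  symm := by constructor; rintro u v ⟨h1, h2⟩; exact ⟨h1.symm, h2.symm⟩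
  loopless := by constructor; rintro u ⟨h1, _⟩; exact h1 rfl


open Finset
open Fin.CommRing

/-- ascending part of binomial monotonicity -/
lemma choose_asc {h i j : ℕ} (hij : i ≤ j) (hj : 2 * j ≤ h) : h.choose i ≤ h.choose j := by
  induction j with
  | zero =>
    have : i = 0 := by omega
    subst this; exact le_rfl
  | succ j ih =>
    rcases Nat.lt_or_ge i (j+1) with hlt | hge
    · have h1 : h.choose i ≤ h.choose j := ih (by omega) (by omega)
      have h2 : h.choose j ≤ h.choose (j+1) :=
        Nat.choose_le_succ_of_lt_half_left (by omega)
      exact h1.trans h2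
    · have : i = j + 1 := by omega
      subst this; exact le_rfl

/-- Claim C : invariant-set count bound transfers to half binomials -/
lemma chooseC {n k m j d : ℕ} (hd : 2 ≤ d) (hmd : m * d = n) (hjd : j * d = k)
    (hkn : 2 * k ≤ n) : m.choose j ≤ (n/2).choose (k/2) := by
  have hm : m ≤ n / 2 := by
    have : m * 2 ≤ n := by nlinarith
    omega
  have hjk : j ≤ k / 2 := by
    have : j * 2 ≤ k := by nlinarith
    omega
  calc m.choose j ≤ (n/2).choose j := Nat.choose_le_choose j hm
    _ ≤ (n/2).choose (k/2) := choose_asc hjk (by omega)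

/-- Claim B : `k * C(n/2, k/2) ≤ C(n, k-1)` -/
lemma chooseB {n k : ℕ} (hk : 2 ≤ k) (hkn : 2 * k ≤ n) :
    k * ((n/2).choose (k/2)) ≤ n.choose (k-1) := by
  rcases eq_or_lt_of_le hk with h2 | h3
  · -- k = 2
    subst h2
    have := Nat.div_mul_le_self n 2
    simpa [Nat.mul_comm] using this
  · -- k ≥ 3
    set h := n / 2 with hh
    set b := k / 2 with hb
    set b' := k - 1 - b with hb'
    have hbb' : b + b' = k - 1 := by omega
    have hhn : h ≤ n := Nat.div_le_self n 2
    have hnh : k ≤ n - h := by omega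
    have hvan : h.choose b * (n - h).choose b' ≤ n.choose (k-1) := by
      have := Nat.add_choose_eq h (n - h) (k - 1)
      rw [Nat.add_sub_cancel' hhn] at this
      rw [this]
      exact Finset.single_le_sum (f := fun p : ℕ × ℕ => h.choose p.1 * (n-h).choose p.2)
        (fun i _ => Nat.zero_le _)
        (Finset.HasAntidiagonal.mem_antidiagonal (a := (b, b')).mpr hbb')
    have h1b' : 1 ≤ b' := by omega
    have hb'half : 2 * b' ≤ n - h := by omega
    have hchain : n - h ≤ (n - h).choose b' := by
      calc n - h = (n - h).choose 1 := (Nat.choose_one_right _).symm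
        _ ≤ (n - h).choose b' := choose_asc h1b' hb'half
    calc k * (h.choose b) ≤ (n - h) * h.choose b := by
          exact Nat.mul_le_mul_right _ hnh
      _ ≤ (n-h).choose b' * h.choose b := Nat.mul_le_mul_right _ hchain
      _ = h.choose b * (n - h).choose b' := by ring
      _ ≤ n.choose (k-1) := hvan

section Shifts

variable {n : ℕ} [NeZero n]

/-- shift of a finset in `Fin n` -/
def shf (t : Fin n) (A : Finset (Fin n)) : Finset (Fin n) := A.image (· + t)

lemma mem_shf {t : Fin n} {A : Finset (Fin n)} {a : Fin n} :
    a ∈ shf t A ↔ a - t ∈ A := by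
  simp only [shf, mem_image]
  constructor
  · rintro ⟨b, hb, rfl⟩; simpa using hb
  · intro h; exact ⟨a - t, h, by ring⟩

lemma card_shf (t : Fin n) (A : Finset (Fin n)) : #(shf t A) = #A :=
  card_image_of_injective _ (fun a b h => by simpa using h)

lemma shf_shf (u v : Fin n) (A : Finset (Fin n)) :
    shf v (shf u A) = shf (u + v) A := by
  simp only [shf, image_image]
  refine image_congr ?_
  intro a _
  simp [Function.comp, add_assoc]

lemma shf_zero (A : Finset (Fin n)) : shf 0 A = A := by
  simp [shf]

/-- invariance under a shift propagates to all (Fin n)-multiples -/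
lemma shf_mul_inv {t : Fin n} {A : Finset (Fin n)} (h : shf t A = A) (x : Fin n) :
    shf (t * x) A = A := by
  have hn : ∀ j : ℕ, shf (j • t) A = A := by
    intro j
    induction j with
    | zero => simpa using shf_zero A
    | succ j ih =>
      have : (j + 1) • t = j • t + t := by rw [add_nsmul, one_nsmul]
      rw [this, ← shf_shf, ih, h]
  have : t * x = x.val • t := by
    rw [nsmul_eq_mul, Fin.cast_val_eq_self, mul_comm]
  rw [this]; exact hn x.val

/-- the gcd element is a multiple of t -/
lemma gcd_is_multiple (t : Fin n) :
    ∃ x : Fin n, ((t.val.gcd n : ℕ) : Fin n) = t * x := by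
  refine ⟨((Nat.gcdA t.val n : ℤ) : Fin n), ?_⟩
  have hb := Nat.gcd_eq_gcd_ab t.val n
  have : (((t.val.gcd n : ℕ) : ℤ) : Fin n) =
      ((t.val : ℤ) * Nat.gcdA t.val n + (n : ℤ) * Nat.gcdB t.val n : ℤ) := by
    exact_mod_cast congrArg (fun z : ℤ => (z : Fin n)) hb
  push_cast at this
  rw [this]
  simp [Fin.cast_val_eq_self, Fin.natCast_self]

end Shifts

section Residues

variable {n : ℕ} [NeZero n]

/-- membership transfer to the canonical representative -/
lemma mem_iff_rep {A : Finset (Fin n)} {m : ℕ} (hm : 0 < m)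
    (hinv : ∀ y : Fin n, shf (((m : ℕ) : Fin n) * y) A = A) (a : Fin n) :
    a ∈ A ↔ ((a.val % m : ℕ) : Fin n) ∈ A := by
  set r : Fin n := ((a.val % m : ℕ) : Fin n) with hr
  set x : Fin n := ((m * (a.val / m) : ℕ) : Fin n) with hx
  have hxmul : x = ((m : ℕ) : Fin n) * ((a.val / m : ℕ) : Fin n) := by
    rw [hx, Nat.cast_mul]
  have hax : r + x = a := by
    rw [hr, hx, ← Nat.cast_add]
    have : a.val % m + m * (a.val / m) = a.val := Nat.mod_add_div _ _
    rw [this, Fin.cast_val_eq_self]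
  have hA : shf x A = A := by rw [hxmul]; exact hinv _
  constructor
  · intro ha
    have : a ∈ shf x A := hA.symm ▸ ha
    rw [mem_shf] at this
    have : a - x = r := by rw [← hax]; ring
    rwa [this] at ‹a - x ∈ A›
  · intro hrA
    have : a - x = r := by rw [← hax]; ring
    have : a - x ∈ A := by rw [this]; exact hrA
    have := mem_shf.mpr this
    rwa [hA] at this

/-- number of elements of Fin n with given residue mod m, when m ∣ n -/
lemma card_residue_class {m : ℕ} (hm : 0 < m) (hdvd : m ∣ n) {r : ℕ} (hr : r < m) :
    #(univ.filter (fun a : Fin n => a.val % m = r)) = n / m := by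
  have hn : 0 < n := Nat.pos_of_ne_zero (NeZero.ne n)
  have hmn : m ≤ n := Nat.le_of_dvd hn hdvd
  rw [← Finset.card_range (n / m)]
  apply Finset.card_bij' (i := fun a _ => a.val / m)
    (j := fun i _ => ((r + i * m : ℕ) : Fin n))
  · intro a ha
    simp only [mem_filter, mem_univ, true_and] at ha
    simp only [mem_range]
    have : a.val < n := a.isLt
    have hnd : n = m * (n / m) := (Nat.mul_div_cancel' hdvd).symm
    exact Nat.div_lt_div_of_lt_of_dvd (by omega) (by omega)
  · intro i hi
    simp only [mem_range] at hi
    have hlt : r + i * m < n := by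
      have h1 : i + 1 ≤ n / m := hi
      have : (i + 1) * m ≤ (n/m) * m := Nat.mul_le_mul_right m hi
      have : (n/m) * m = n := Nat.div_mul_cancel hdvd
      nlinarith
    simp only [mem_filter, mem_univ, true_and]
    rw [Fin.val_natCast, Nat.mod_eq_of_lt hlt, Nat.add_mul_mod_self_right,
      Nat.mod_eq_of_lt hr]
  · intro a ha
    simp only [mem_filter, mem_univ, true_and] at ha
    have : r + a.val / m * m = a.val := by
      have h1 := Nat.mod_add_div a.val m
      have h2 : a.val / m * m = m * (a.val / m) := Nat.mul_comm _ _
      omega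
    rw [this, Fin.cast_val_eq_self]
  · intro i hi
    simp only [mem_range] at hi
    have hlt : r + i * m < n := by
      have : (i + 1) * m ≤ (n/m) * m := Nat.mul_le_mul_right m hi
      have : (n/m) * m = n := Nat.div_mul_cancel hdvd
      nlinarith
    rw [Fin.val_natCast, Nat.mod_eq_of_lt hlt]
    rw [Nat.add_mul_div_right _ _ hm, Nat.div_eq_of_lt hr]
    omega

end Residues

section InvCount

variable {n k : ℕ} [NeZero n]

open scoped Classical

/-- an invariant set is a union of cosets: its size is (number of small reps) * d -/
lemma invariant_card_eq {t : Fin n} (ht : t ≠ 0) {A : Finset (Fin n)} (hA : shf t A = A) :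
    #(A.filter (fun a => a.val < t.val.gcd n)) * (n / t.val.gcd n) = #A := by
  set m := t.val.gcd n with hm
  set d := n / m with hd
  have htval : t.val ≠ 0 := by
    intro h; exact ht (by ext; simp [h])
  have hm0 : 0 < m := Nat.gcd_pos_of_pos_left _ (Nat.pos_of_ne_zero htval)
  have hdvd : m ∣ n := Nat.gcd_dvd_right _ _
  have hinv : ∀ y : Fin n, shf (((m : ℕ) : Fin n) * y) A = A := by
    obtain ⟨x, hx⟩ := gcd_is_multiple t
    intro y
    rw [hx, mul_assoc]
    exact shf_mul_inv hA _
  -- fiberwise count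
  have hfib : #A = ∑ r ∈ range m, #(A.filter (fun a => a.val % m = r)) :=
    card_eq_sum_card_fiberwise (fun a _ => mem_range.mpr (Nat.mod_lt _ hm0))
  have hterm : ∀ r ∈ range m, #(A.filter (fun a => a.val % m = r)) =
      if ((r : ℕ) : Fin n) ∈ A then d else 0 := by
    intro r hr
    rw [mem_range] at hr
    by_cases hrA : ((r : ℕ) : Fin n) ∈ A
    · rw [if_pos hrA]
      have : A.filter (fun a => a.val % m = r) = univ.filter (fun a : Fin n => a.val % m = r) := by
        ext a
        simp only [mem_filter, mem_univ, true_and]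
        constructor
        · exact fun h => h.2
        · intro h
          refine ⟨?_, h⟩
          rw [mem_iff_rep hm0 hinv a, h]
          exact hrA
      rw [this, card_residue_class hm0 hdvd hr]
    · rw [if_neg hrA]
      rw [card_eq_zero]
      apply eq_empty_of_forall_notMem
      intro a ha
      rw [mem_filter] at ha
      apply hrA
      rw [← ha.2]
      exact (mem_iff_rep hm0 hinv a).mp ha.1
  have hsum : #A = #((range m).filter (fun r => ((r : ℕ) : Fin n) ∈ A)) * d := by
    rw [hfib, Finset.sum_congr rfl hterm, ← Finset.sum_filter, Finset.sum_const,
      smul_eq_mul]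
  -- now identify reps with small elements of A
  have hbij : #((range m).filter (fun r => ((r : ℕ) : Fin n) ∈ A)) =
      #(A.filter (fun a => a.val < m)) := by
    have hn : 0 < n := Nat.pos_of_ne_zero (NeZero.ne n)
    have hmn : m ≤ n := Nat.le_of_dvd hn hdvd
    apply Finset.card_bij' (i := fun r _ => ((r : ℕ) : Fin n)) (j := fun a _ => a.val)
    · intro r hr
      simp only [mem_filter, mem_range] at hr
      simp only [mem_filter]
      refine ⟨hr.2, ?_⟩
      rw [Fin.val_natCast, Nat.mod_eq_of_lt (by omega)]
      exact hr.1
    · intro a ha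
      simp only [mem_filter] at ha
      simp only [mem_filter, mem_range]
      refine ⟨ha.2, ?_⟩
      rw [Fin.cast_val_eq_self]
      exact ha.1
    · intro r hr
      simp only [mem_filter, mem_range] at hr
      rw [Fin.val_natCast, Nat.mod_eq_of_lt (by omega)]
    · intro a ha
      exact Fin.cast_val_eq_self a
  rw [← hbij, ← hsum]

end InvCount

section InvCount2

variable {n k : ℕ} [NeZero n]

open scoped Classical

/-- invariant sets are determined by their small representatives -/
lemma invariant_ext {t : Fin n} (ht : t ≠ 0) {A B : Finset (Fin n)}
    (hA : shf t A = A) (hB : shf t B = B)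
    (h : A.filter (fun a => a.val < t.val.gcd n) = B.filter (fun a => a.val < t.val.gcd n)) :
    A = B := by
  set m := t.val.gcd n with hm
  have htval : t.val ≠ 0 := by
    intro hh; exact ht (by ext; simp [hh])
  have hm0 : 0 < m := Nat.gcd_pos_of_pos_left _ (Nat.pos_of_ne_zero htval)
  have hdvd : m ∣ n := Nat.gcd_dvd_right _ _
  have hmn : m ≤ n := Nat.le_of_dvd (Nat.pos_of_ne_zero (NeZero.ne n)) hdvd
  obtain ⟨x, hx⟩ := gcd_is_multiple t
  have hinvA : ∀ y : Fin n, shf (((m : ℕ) : Fin n) * y) A = A := by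
    intro y; rw [hx, mul_assoc]; exact shf_mul_inv hA _
  have hinvB : ∀ y : Fin n, shf (((m : ℕ) : Fin n) * y) B = B := by
    intro y; rw [hx, mul_assoc]; exact shf_mul_inv hB _
  ext a
  have hrep : (((a.val % m : ℕ) : Fin n)).val = a.val % m := by
    rw [Fin.val_natCast, Nat.mod_eq_of_lt (lt_of_lt_of_le (Nat.mod_lt _ hm0) hmn)]
  have hlt : (((a.val % m : ℕ) : Fin n)).val < m := by
    rw [hrep]; exact Nat.mod_lt _ hm0
  rw [mem_iff_rep hm0 hinvA a, mem_iff_rep hm0 hinvB a]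
  constructor
  · intro hmem
    have : ((a.val % m : ℕ) : Fin n) ∈ A.filter (fun a => a.val < m) :=
      mem_filter.mpr ⟨hmem, hlt⟩
    rw [h] at this
    exact (mem_filter.mp this).1
  · intro hmem
    have : ((a.val % m : ℕ) : Fin n) ∈ B.filter (fun a => a.val < m) :=
      mem_filter.mpr ⟨hmem, hlt⟩
    rw [← h] at this
    exact (mem_filter.mp this).1

lemma card_small_reps {m : ℕ} (hmn : m ≤ n) :
    #(univ.filter (fun a : Fin n => a.val < m)) = m := by
  conv_rhs => rw [← Finset.card_range m]
  apply Finset.card_nbij' (i := fun a => a.val) (j := fun r => ((r : ℕ) : Fin n))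
  · intro a ha
    simp only [mem_coe, mem_filter] at ha
    exact mem_range.mpr ha.2
  · intro r hr
    rw [mem_coe, mem_range] at hr
    simp only [mem_coe, mem_filter, mem_univ, true_and]
    rw [Fin.val_natCast, Nat.mod_eq_of_lt (by omega)]
    exact hr
  · intro a _; exact Fin.cast_val_eq_self a
  · intro r hr
    rw [mem_coe, mem_range] at hr
    dsimp only
    rw [Fin.val_natCast, Nat.mod_eq_of_lt (by omega)]

/-- bound on the number of invariant vertices -/
lemma Nt_le {t : Fin n} (ht : t ≠ 0) (hk2 : 2 ≤ k) (hkn : 2 * k ≤ n) :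
    #(univ.filter (fun A : {A : Finset (Fin n) // Finset.card A = k} => shf t A.1 = A.1)) ≤
      if (k : Fin n) * t = 0 then (n/2).choose (k/2) else 0 := by
  rcases Finset.eq_empty_or_nonempty
    (univ.filter (fun A : {A : Finset (Fin n) // Finset.card A = k} => shf t A.1 = A.1)) with
    he | ⟨A₀, hA₀⟩
  · rw [he]; simp only [card_empty]; split <;> omega
  · set m := t.val.gcd n with hm
    set d := n / m with hd
    have htval : t.val ≠ 0 := by
      intro hh; exact ht (by ext; simp [hh])
    have hm0 : 0 < m := Nat.gcd_pos_of_pos_left _ (Nat.pos_of_ne_zero htval)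
    have hdvd : m ∣ n := Nat.gcd_dvd_right _ _
    have hmlt : m < n := lt_of_le_of_lt (Nat.gcd_le_left _ (Nat.pos_of_ne_zero htval)) t.isLt
    have hmd : m * d = n := Nat.mul_div_cancel' hdvd
    have hd2 : 2 ≤ d := by
      rcases Nat.lt_or_ge d 2 with hlt | hge
      · interval_cases d <;> omega
      · exact hge
    have hA₀inv : shf t A₀.1 = A₀.1 := (mem_filter.mp hA₀).2
    have hA₀card := invariant_card_eq ht hA₀inv
    rw [A₀.2] at hA₀card
    have hddvd : d ∣ k := ⟨_, hA₀card.symm.trans (Nat.mul_comm _ d)⟩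
    -- (k : Fin n) * t = 0
    have hkt : (k : Fin n) * t = 0 := by
      have h1 : n ∣ k * t.val := by
        obtain ⟨e, he⟩ := hddvd
        obtain ⟨s, hs⟩ : m ∣ t.val := Nat.gcd_dvd_left _ _
        exact ⟨e * s, by rw [he, hs, ← hmd]; ring⟩
      calc (k : Fin n) * t = ((k * t.val : ℕ) : Fin n) := by
            rw [Nat.cast_mul, Fin.cast_val_eq_self]
        _ = 0 := Fin.natCast_eq_zero.mpr h1
    rw [if_pos hkt]
    -- injection into powersetCard
    have hTm : #(univ.filter (fun a : Fin n => a.val < m)) = m := card_small_reps (le_of_lt hmlt)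
    calc #(univ.filter (fun A : {A : Finset (Fin n) // Finset.card A = k} => shf t A.1 = A.1))
        ≤ #(powersetCard (k / d) (univ.filter (fun a : Fin n => a.val < m))) := by
          apply card_le_card_of_injOn (fun A => A.1.filter (fun a => a.val < m))
          · intro A hA
            have hAinv : shf t A.1 = A.1 := (mem_filter.mp (mem_coe.mp hA)).2
            have hAcard := invariant_card_eq ht hAinv
            rw [A.2] at hAcard
            rw [← hm, ← hd] at hAcard
            rw [mem_coe, mem_powersetCard]
            constructor
            · intro a ha
              simp only [mem_filter] at ha ⊢
              exact ⟨mem_univ _, ha.2⟩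
            · exact (Nat.div_eq_of_eq_mul_left (by omega) hAcard.symm).symm
          · intro A hA B hB hf
            have hAinv : shf t A.1 = A.1 := (mem_filter.mp (mem_coe.mp hA)).2
            have hBinv : shf t B.1 = B.1 := (mem_filter.mp (mem_coe.mp hB)).2
            exact Subtype.ext (invariant_ext ht hAinv hBinv hf)
      _ = m.choose (k / d) := by rw [card_powersetCard, hTm]
      _ ≤ (n/2).choose (k/2) := by
          apply chooseC hd2 hmd _ hkn
          exact Nat.div_mul_cancel hddvd

end InvCount2

section BadT

variable {n k : ℕ} [NeZero n]

open scoped Classical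

lemma card_badT (hk0 : 0 < k) :
    #(univ.filter (fun t : Fin n => t ≠ 0 ∧ (k : Fin n) * t = 0)) ≤ k - 1 := by
  set g := n.gcd k with hg
  set n' := n / g with hn'
  have hn0 : 0 < n := Nat.pos_of_ne_zero (NeZero.ne n)
  have hg0 : 0 < g := Nat.gcd_pos_of_pos_left _ hn0
  have hn'0 : 0 < n' := Nat.div_pos (Nat.le_of_dvd hn0 (Nat.gcd_dvd_left _ _)) hg0
  have hgk : g ≤ k := Nat.le_of_dvd hk0 (Nat.gcd_dvd_right _ _)
  have hdvdval : ∀ t : Fin n, (k : Fin n) * t = 0 → n' ∣ t.val := by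
    intro t htk
    have hdvdn : n ∣ k * t.val := by
      apply Fin.natCast_eq_zero.mp
      rw [Nat.cast_mul, Fin.cast_val_eq_self]
      exact htk
    have h1' : g * n' ∣ g * ((k / g) * t.val) := by
      have hng : g * n' = n := Nat.mul_div_cancel' (Nat.gcd_dvd_left _ _)
      have hkg : g * ((k / g) * t.val) = ((k / g) * g) * t.val := by ring
      rw [hng, hkg, Nat.div_mul_cancel (Nat.gcd_dvd_right _ _)]
      exact hdvdn
    have h2 : n' ∣ (k / g) * t.val := (mul_dvd_mul_iff_left hg0.ne').mp h1'
    have hco : Nat.Coprime n' (k / g) := Nat.coprime_div_gcd_div_gcd hg0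
    exact hco.dvd_of_dvd_mul_left h2
  have hkey : #(univ.filter (fun t : Fin n => t ≠ 0 ∧ (k : Fin n) * t = 0)) ≤ #(Ico 1 g) := by
    apply card_le_card_of_injOn (fun t => t.val / n')
    · intro t ht
      simp only [mem_coe, mem_filter, mem_univ, true_and] at ht
      obtain ⟨ht0, htk⟩ := ht
      have hn'dvd : n' ∣ t.val := hdvdval t htk
      have htv0 : t.val ≠ 0 := by
        intro hh; exact ht0 (by ext; simp [hh])
      rw [mem_coe, mem_Ico]
      constructor
      · have : n' ≤ t.val := Nat.le_of_dvd (Nat.pos_of_ne_zero htv0) hn'dvd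
        exact Nat.one_le_div_iff hn'0 |>.mpr this
      · rw [Nat.div_lt_iff_lt_mul hn'0]
        calc t.val < n := t.isLt
          _ = g * n' := (Nat.mul_div_cancel' (Nat.gcd_dvd_left _ _)).symm
        done
    · intro t1 ht1 t2 ht2 hf
      simp only [mem_coe, mem_filter, mem_univ, true_and] at ht1 ht2
      have hd1 : n' ∣ t1.val := hdvdval t1 ht1.2
      have hd2 : n' ∣ t2.val := hdvdval t2 ht2.2
      apply Fin.ext
      dsimp only at hf
      calc t1.val = t1.val / n' * n' := (Nat.div_mul_cancel hd1).symm
        _ = t2.val / n' * n' := by rw [hf]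
        _ = t2.val := Nat.div_mul_cancel hd2
  rw [Nat.card_Ico] at hkey
  omega

end BadT

section Dsets

variable {n k : ℕ} [NeZero n]

open scoped Classical

/-- symmetric difference of a one-swap -/
lemma symmDiff_swap {A : Finset (Fin n)} {a b : Fin n} (ha : a ∈ A) (hb : b ∉ A) :
    symmDiff (insert b (A.erase a)) A = {b, a} := by
  have hab : a ≠ b := fun h => hb (h ▸ ha)
  ext x
  rw [Finset.mem_symmDiff]
  simp only [mem_insert, mem_erase, mem_singleton]
  constructor
  · rintro (⟨hx1, hx2⟩ | ⟨hx1, hx2⟩)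
    · rcases hx1 with rfl | ⟨_, _⟩
      · exact Or.inl rfl
      · tauto
    · push_neg at hx2
      right
      by_contra hxa
      exact (hx2.2 hxa) hx1
  · rintro (rfl | rfl)
    · exact Or.inl ⟨Or.inl rfl, hb⟩
    · exact Or.inr ⟨ha, fun h => by
        rcases h with h | ⟨h1, _⟩
        · exact hab h
        · exact h1 rfl⟩

/-- sum of elements -/
def fsum (A : Finset (Fin n)) : Fin n := ∑ x ∈ A, x

lemma fsum_swap {A : Finset (Fin n)} {a b : Fin n} (ha : a ∈ A) (hb : b ∉ A) :
    fsum (insert b (A.erase a)) = fsum A - a + b := by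
  have hbe : b ∉ A.erase a := fun h => hb (mem_of_mem_erase h)
  rw [fsum, sum_insert hbe]
  have h1 : ∑ x ∈ A.erase a, x + a = ∑ x ∈ A, x := Finset.sum_erase_add A _ ha
  have h2 : ∑ x ∈ A.erase a, x = fsum A - a := by
    rw [fsum, ← h1]; ring
  rw [h2]; ring

/-- the candidate dominating sets -/
noncomputable def Dset (n k : ℕ) [NeZero n] (c : Fin n) :
    Finset {A : Finset (Fin n) // Finset.card A = k} :=
  univ.filter (fun A => fsum A.1 = c ∨ shf (c - fsum A.1) A.1 = A.1)

lemma Dset_dominating (hk : 0 < k) (c : Fin n) :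
    IsDominatingSet (tokenGraph (⊤ : SimpleGraph (Fin n)) k) ↑(Dset n k c) := by
  intro A
  by_cases hA : A ∈ Dset n k c
  · exact Or.inl (mem_coe.mpr hA)
  · right
    rw [Dset, mem_filter] at hA
    push_neg at hA
    have hA' := hA (mem_univ A)
    set t := c - fsum A.1 with htdef
    have ht0 : t ≠ 0 := by
      rw [htdef, sub_ne_zero]
      exact fun h => hA'.1 h.symm
    have hns : ¬ (shf t A.1 ⊆ A.1) := by
      intro hsub
      exact hA'.2 (Finset.eq_of_subset_of_card_le hsub (by rw [card_shf]))
    obtain ⟨b, hbs, hbA⟩ := Finset.not_subset.mp hns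
    have haA : b - t ∈ A.1 := mem_shf.mp hbs
    set a := b - t with hadef
    have hba : b = a + t := by rw [hadef]; ring
    have hab : a ≠ b := by
      intro h
      apply ht0
      rw [← h] at hba
      have := hba
      exact (add_eq_left.mp this.symm)
    -- the neighbor
    have hbe : b ∉ A.1.erase a := fun h => hbA (mem_of_mem_erase h)
    have hcard : #(insert b (A.1.erase a)) = k := by
      rw [card_insert_of_notMem hbe, card_erase_of_mem haA, A.2]
      omega
    refine ⟨⟨insert b (A.1.erase a), hcard⟩, ?_, ?_⟩
    · rw [mem_coe, Dset, mem_filter]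
      refine ⟨mem_univ _, Or.inl ?_⟩
      rw [fsum_swap haA hbA, hba]
      ring
    · refine ⟨b, a, by simpa using hab.symm, ?_⟩
      exact symmDiff_swap haA hbA

end Dsets


section Assembly

variable {n k : ℕ} [NeZero n]

open scoped Classical

lemma sum_Dset_le (hk2 : 2 ≤ k) (hkn : 2 * k ≤ n) :
    ∑ c : Fin n, #(Dset n k c) ≤ n.choose k + (k - 1) * ((n/2).choose (k/2)) := by
  have hsplit : ∀ c : Fin n, #(Dset n k c) ≤
      #(univ.filter (fun A : {A : Finset (Fin n) // Finset.card A = k} => fsum A.1 = c)) +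
      #(univ.filter (fun A : {A : Finset (Fin n) // Finset.card A = k} =>
          fsum A.1 ≠ c ∧ shf (c - fsum A.1) A.1 = A.1)) := by
    intro c
    have : Dset n k c ⊆
        (univ.filter (fun A : {A : Finset (Fin n) // Finset.card A = k} => fsum A.1 = c)) ∪
        (univ.filter (fun A : {A : Finset (Fin n) // Finset.card A = k} =>
          fsum A.1 ≠ c ∧ shf (c - fsum A.1) A.1 = A.1)) := by
      intro A hA
      rw [Dset, mem_filter] at hA
      rw [mem_union, mem_filter, mem_filter]
      by_cases hfs : fsum A.1 = c
      · exact Or.inl ⟨mem_univ _, hfs⟩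
      · rcases hA.2 with h | h
        · exact absurd h hfs
        · exact Or.inr ⟨mem_univ _, hfs, h⟩
    calc #(Dset n k c) ≤ #(_ ∪ _) := card_le_card this
      _ ≤ _ := card_union_le _ _
  have h1 : ∑ c : Fin n,
      #(univ.filter (fun A : {A : Finset (Fin n) // Finset.card A = k} => fsum A.1 = c)) =
      n.choose k := by
    rw [← card_eq_sum_card_fiberwise (f := fun A : {A : Finset (Fin n) // Finset.card A = k} =>
      fsum A.1) (fun A _ => mem_univ _)]
    rw [card_univ, Fintype.card_finset_len, Fintype.card_fin]
  have h2 : ∑ c : Fin n,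
      #(univ.filter (fun A : {A : Finset (Fin n) // Finset.card A = k} =>
        fsum A.1 ≠ c ∧ shf (c - fsum A.1) A.1 = A.1)) ≤
      (k - 1) * ((n/2).choose (k/2)) := by
    -- swap the two summations
    have e1 : ∑ c : Fin n,
        #(univ.filter (fun A : {A : Finset (Fin n) // Finset.card A = k} =>
          fsum A.1 ≠ c ∧ shf (c - fsum A.1) A.1 = A.1)) =
        ∑ A : {A : Finset (Fin n) // Finset.card A = k},
          #(univ.filter (fun t : Fin n => t ≠ 0 ∧ shf t A.1 = A.1)) := by
      have e0 : ∀ A : {A : Finset (Fin n) // Finset.card A = k},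
          #(univ.filter (fun c : Fin n => fsum A.1 ≠ c ∧ shf (c - fsum A.1) A.1 = A.1)) =
          #(univ.filter (fun t : Fin n => t ≠ 0 ∧ shf t A.1 = A.1)) := by
        intro A
        apply Finset.card_nbij' (i := fun c => c - fsum A.1) (j := fun t => fsum A.1 + t)
        · intro c hc
          simp only [mem_coe, mem_filter, mem_univ, true_and] at hc ⊢
          exact ⟨sub_ne_zero.mpr (Ne.symm hc.1), hc.2⟩
        · intro t ht
          simp only [mem_coe, mem_filter, mem_univ, true_and] at ht ⊢
          constructor
          · intro hh
            exact ht.1 (by linear_combination -hh)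
          · have : fsum A.1 + t - fsum A.1 = t := by ring
            rw [this]; exact ht.2
        · intro c _; ring
        · intro t _; ring
      calc ∑ c : Fin n, _ = ∑ c : Fin n,
            ∑ A : {A : Finset (Fin n) // Finset.card A = k},
              if fsum A.1 ≠ c ∧ shf (c - fsum A.1) A.1 = A.1 then 1 else 0 := by
            refine Finset.sum_congr rfl fun c _ => ?_
            rw [card_filter]
        _ = ∑ A : {A : Finset (Fin n) // Finset.card A = k}, ∑ c : Fin n,
              if fsum A.1 ≠ c ∧ shf (c - fsum A.1) A.1 = A.1 then 1 else 0 :=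
            Finset.sum_comm
        _ = ∑ A : {A : Finset (Fin n) // Finset.card A = k},
              #(univ.filter (fun c : Fin n => fsum A.1 ≠ c ∧ shf (c - fsum A.1) A.1 = A.1)) := by
            refine Finset.sum_congr rfl fun A _ => ?_
            rw [card_filter]
        _ = _ := Finset.sum_congr rfl fun A _ => e0 A
    rw [e1]
    have e2 : ∑ A : {A : Finset (Fin n) // Finset.card A = k},
        #(univ.filter (fun t : Fin n => t ≠ 0 ∧ shf t A.1 = A.1)) =
        ∑ t : Fin n,
          #(univ.filter (fun A : {A : Finset (Fin n) // Finset.card A = k} =>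
            t ≠ 0 ∧ shf t A.1 = A.1)) := by
      calc _ = ∑ A : {A : Finset (Fin n) // Finset.card A = k}, ∑ t : Fin n,
            if t ≠ 0 ∧ shf t A.1 = A.1 then 1 else 0 := by
            refine Finset.sum_congr rfl fun A _ => ?_; rw [card_filter]
        _ = ∑ t : Fin n, ∑ A : {A : Finset (Fin n) // Finset.card A = k},
            if t ≠ 0 ∧ shf t A.1 = A.1 then 1 else 0 := Finset.sum_comm
        _ = _ := by
            refine Finset.sum_congr rfl fun t _ => ?_; rw [card_filter]
    rw [e2]
    have e3 : ∀ t : Fin n,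
        #(univ.filter (fun A : {A : Finset (Fin n) // Finset.card A = k} =>
          t ≠ 0 ∧ shf t A.1 = A.1)) ≤
        if t ≠ 0 ∧ (k : Fin n) * t = 0 then (n/2).choose (k/2) else 0 := by
      intro t
      by_cases ht : t = 0
      · subst ht
        simp only [ne_eq, not_true_eq_false, false_and, if_false]
        rw [Finset.card_eq_zero.mpr]
        apply Finset.filter_false_of_mem
        intro A _
        simp
      · have hfe : (univ.filter (fun A : {A : Finset (Fin n) // Finset.card A = k} =>
            t ≠ 0 ∧ shf t A.1 = A.1)) =
            (univ.filter (fun A : {A : Finset (Fin n) // Finset.card A = k} =>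
              shf t A.1 = A.1)) := by
          refine Finset.filter_congr fun A _ => ?_
          simp [ht]
        rw [hfe]
        have := Nt_le (k := k) ht hk2 hkn
        by_cases hkt : (k : Fin n) * t = 0
        · rw [if_pos ⟨ht, hkt⟩]
          rw [if_pos hkt] at this
          exact this
        · rw [if_neg (by tauto)]
          rw [if_neg hkt] at this
          exact this
    calc ∑ t : Fin n, _ ≤ ∑ t : Fin n,
          if t ≠ 0 ∧ (k : Fin n) * t = 0 then (n/2).choose (k/2) else 0 :=
        Finset.sum_le_sum fun t _ => e3 t
      _ = #(univ.filter (fun t : Fin n => t ≠ 0 ∧ (k : Fin n) * t = 0)) * ((n/2).choose (k/2)) := by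
        rw [← Finset.sum_filter, Finset.sum_const, smul_eq_mul]
      _ ≤ (k - 1) * ((n/2).choose (k/2)) :=
        Nat.mul_le_mul_right _ (card_badT (by omega))
  calc ∑ c : Fin n, #(Dset n k c) ≤ ∑ c : Fin n, (_ + _) := Finset.sum_le_sum fun c _ => hsplit c
    _ = _ + _ := Finset.sum_add_distrib
    _ ≤ n.choose k + (k - 1) * ((n/2).choose (k/2)) := by
        rw [h1]
        exact Nat.add_le_add_left h2 _

lemma upper_main (hk2 : 2 ≤ k) (hkn : 2 * k ≤ n) :
    k * dominationNumber (tokenGraph (⊤ : SimpleGraph (Fin n)) k) ≤ n.choose (k - 1) := by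
  have hn0 : 0 < n := Nat.pos_of_ne_zero (NeZero.ne n)
  obtain ⟨c, _, hmin⟩ := Finset.exists_min_image (univ : Finset (Fin n))
    (fun c => #(Dset n k c)) ⟨0, mem_univ 0⟩
  have hγ : dominationNumber (tokenGraph (⊤ : SimpleGraph (Fin n)) k) ≤ #(Dset n k c) :=
    Nat.sInf_le ⟨Dset n k c, Dset_dominating (by omega) c, rfl⟩
  have hpig : n * #(Dset n k c) ≤ ∑ c' : Fin n, #(Dset n k c') := by
    calc n * #(Dset n k c) = ∑ _c' : Fin n, #(Dset n k c) := by
          rw [Finset.sum_const, card_univ, Fintype.card_fin, smul_eq_mul]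
      _ ≤ ∑ c' : Fin n, #(Dset n k c') := Finset.sum_le_sum fun i _ => hmin i (mem_univ i)
  have hsum := sum_Dset_le (n := n) (k := k) hk2 hkn
  have hch : n.choose (k-1) * (n - (k-1)) = n.choose k * k := by
    have h := Nat.choose_succ_right_eq n (k-1)
    have hk1 : k - 1 + 1 = k := by omega
    rw [hk1] at h
    exact h.symm
  have hB := chooseB hk2 hkn
  have hsub : n - (k-1) + (k-1) = n := by omega
  have main : n * (k * dominationNumber (tokenGraph (⊤ : SimpleGraph (Fin n)) k)) ≤
      n * n.choose (k - 1) := by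
    calc n * (k * dominationNumber (tokenGraph (⊤ : SimpleGraph (Fin n)) k))
        ≤ n * (k * #(Dset n k c)) := by
          exact Nat.mul_le_mul_left _ (Nat.mul_le_mul_left _ hγ)
      _ = k * (n * #(Dset n k c)) := by ring
      _ ≤ k * (∑ c' : Fin n, #(Dset n k c')) := Nat.mul_le_mul_left _ hpig
      _ ≤ k * (n.choose k + (k - 1) * ((n/2).choose (k/2))) := Nat.mul_le_mul_left _ hsum
      _ = k * n.choose k + (k - 1) * (k * ((n/2).choose (k/2))) := by ring
      _ ≤ k * n.choose k + (k - 1) * n.choose (k-1) :=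
          Nat.add_le_add_left (Nat.mul_le_mul_left _ hB) _
      _ = n.choose (k-1) * (n - (k-1)) + (k-1) * n.choose (k-1) := by
          rw [hch]; ring
      _ = n.choose (k-1) * ((n - (k-1)) + (k-1)) := by ring
      _ = n * n.choose (k - 1) := by rw [hsub]; ring
  exact Nat.le_of_mul_le_mul_left main hn0

end Assembly

section TokenK

variable {n k : ℕ} [NeZero n]

local notation "TV" => {A : Finset (Fin n) // Finset.card A = k}

open scoped Classical
local notation "TG" => tokenGraph (⊤ : SimpleGraph (Fin n)) k

/-- structure of adjacency: the two sets differ by one swap -/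
lemma adj_structure {B C : TV} (h : (TG).Adj B C) :
    ∃ y x : Fin n, B.1 \ C.1 = {y} ∧ C.1 \ B.1 = {x} ∧
      C.1 = insert x (B.1.erase y) := by
  obtain ⟨u, v, huv, hsd⟩ := h
  have huv' : u ≠ v := by simpa using huv
  have hcard2 : #(B.1 \ C.1) + #(C.1 \ B.1) = 2 := by
    have hdisj : Disjoint (B.1 \ C.1) (C.1 \ B.1) := disjoint_sdiff_sdiff
    have : (B.1 \ C.1) ∪ (C.1 \ B.1) = {u, v} := by
      rw [← Finset.sup_eq_union, ← symmDiff_def]; exact hsd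
    rw [← card_union_of_disjoint hdisj, this, card_pair huv']
  have heq : #(B.1 \ C.1) = #(C.1 \ B.1) := by
    have h1 : #(B.1 \ C.1) + #(B.1 ∩ C.1) = #B.1 := card_sdiff_add_card_inter _ _
    have h2 : #(C.1 \ B.1) + #(C.1 ∩ B.1) = #C.1 := card_sdiff_add_card_inter _ _
    rw [inter_comm] at h2
    have := B.2; have := C.2; omega
  have hB1 : #(B.1 \ C.1) = 1 := by omega
  have hC1 : #(C.1 \ B.1) = 1 := by omega
  obtain ⟨y, hy⟩ := card_eq_one.mp hB1
  obtain ⟨x, hx⟩ := card_eq_one.mp hC1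
  refine ⟨y, x, hy, hx, ?_⟩
  have hyB : y ∈ B.1 ∧ y ∉ C.1 := by
    have := hy ▸ mem_singleton_self y; simpa [mem_sdiff] using (mem_sdiff.mp (hy ▸ mem_singleton_self y))
  have hxC : x ∈ C.1 ∧ x ∉ B.1 := by
    simpa [mem_sdiff] using (mem_sdiff.mp (hx ▸ mem_singleton_self x))
  ext a
  simp only [mem_insert, mem_erase]
  constructor
  · intro haC
    by_cases haB : a ∈ B.1
    · right
      refine ⟨fun hay => hyB.2 (hay ▸ haC), haB⟩
    · have : a ∈ C.1 \ B.1 := mem_sdiff.mpr ⟨haC, haB⟩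
      rw [hx] at this
      exact Or.inl (mem_singleton.mp this)
  · rintro (rfl | ⟨hay, haB⟩)
    · exact hxC.1
    · by_contra haC
      have : a ∈ B.1 \ C.1 := mem_sdiff.mpr ⟨haB, haC⟩
      rw [hy] at this
      exact hay (mem_singleton.mp this)

/-- number of neighbors of a vertex is at most k(n-k) -/
lemma card_neighbors_le (B : TV) :
    #(univ.filter (fun C : TV => (TG).Adj B C)) ≤ k * (n - k) := by
  classical
  have hcard : #(B.1 ×ˢ B.1ᶜ) = k * (n - k) := by
    rw [card_product, card_compl, B.2, Fintype.card_fin]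
  rw [← hcard]
  apply card_le_card_of_injOn
    (fun C => (WithTop.untopD 0 (B.1 \ C.1).min, WithTop.untopD 0 (C.1 \ B.1).min))
  · intro C hC
    obtain ⟨y, x, hy, hx, _⟩ := adj_structure (mem_filter.mp (mem_coe.mp hC)).2
    simp only [mem_coe, hy, hx]
    simp only [min_singleton, WithTop.untopD_coe, mem_product, mem_compl]
    constructor
    · have := hy ▸ mem_singleton_self y
      exact (mem_sdiff.mp this).1
    · have := hx ▸ mem_singleton_self x
      exact (mem_sdiff.mp this).2
  · intro C1 hC1 C2 hC2 hf
    obtain ⟨y1, x1, hy1, hx1, he1⟩ := adj_structure (mem_filter.mp (mem_coe.mp hC1)).2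
    obtain ⟨y2, x2, hy2, hx2, he2⟩ := adj_structure (mem_filter.mp (mem_coe.mp hC2)).2
    dsimp only at hf
    rw [hy1, hx1, hy2, hx2] at hf
    simp only [min_singleton, WithTop.untopD_coe, Prod.mk.injEq] at hf
    apply Subtype.ext
    rw [he1, he2, hf.1, hf.2]

/-- counting bound for any dominating set -/
lemma counting_bound {D : Finset TV} (hD : IsDominatingSet (TG) ↑D) :
    n.choose k ≤ #D * (1 + k * (n - k)) := by
  classical
  have hcover : (univ : Finset TV) ⊆
      D.biUnion (fun B => insert B (univ.filter (fun C => (TG).Adj B C))) := by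
    intro A _
    rcases hD A with hmem | ⟨B, hB, hadj⟩
    · exact mem_biUnion.mpr ⟨A, by simpa using hmem, mem_insert_self _ _⟩
    · exact mem_biUnion.mpr ⟨B, by simpa using hB,
        mem_insert_of_mem (mem_filter.mpr ⟨mem_univ _, hadj⟩)⟩
  calc n.choose k = #(univ : Finset TV) := by
        rw [card_univ, Fintype.card_finset_len, Fintype.card_fin]
    _ ≤ #(D.biUnion _) := card_le_card hcover
    _ ≤ ∑ B ∈ D, #(insert B (univ.filter (fun C => (TG).Adj B C))) := card_biUnion_le
    _ ≤ ∑ B ∈ D, (1 + k * (n - k)) := by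
        refine sum_le_sum fun B _ => ?_
        calc #(insert B (univ.filter (fun C => (TG).Adj B C)))
            ≤ #(univ.filter (fun C => (TG).Adj B C)) + 1 := card_insert_le _ _
          _ ≤ 1 + k * (n - k) := by
              have := card_neighbors_le B; omega
    _ = #D * (1 + k * (n - k)) := by rw [sum_const, smul_eq_mul]

end TokenK


lemma lower_arith {n k C C' γ : ℕ} (hk : 2 ≤ k) (hkn : 2 * k ≤ n) (hγ : 0 < γ)
    (hch : C' * (n - (k-1)) = C * k) (hcount : C ≤ γ * (1 + k * (n - k))) :
    C' < k ^ 2 * γ := by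
  obtain ⟨m, rfl⟩ : ∃ m, n = k + m := ⟨n - k, by omega⟩
  have e1 : k + m - (k-1) = m + 1 := by omega
  have e2 : k + m - k = m := by omega
  rw [e1] at hch
  rw [e2] at hcount
  by_contra hcon
  push_neg at hcon
  have h3 : k ^ 2 * γ * (m+1) ≤ C' * (m+1) := Nat.mul_le_mul_right _ hcon
  have h4 : C * k ≤ γ * (1 + k * m) * k := Nat.mul_le_mul_right _ hcount
  nlinarith [h3, h4, hch, hγ, hk]

/-- For `2 ≤ k` and `2k ≤ n`, the domination number of `F_k(Kₙ)` satisfies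
`(1/k²)·C(n, k-1) < γ(F_k(Kₙ)) ≤ (1/k)·C(n, k-1)`. -/
theorem domination_token_complete_bounds (n k : ℕ) (hk : 2 ≤ k) (hkn : 2 * k ≤ n) :
    (1 / (k ^ 2) : ℚ) * (n.choose (k - 1)) <
        dominationNumber (tokenGraph (⊤ : SimpleGraph (Fin n)) k) ∧
      (dominationNumber (tokenGraph (⊤ : SimpleGraph (Fin n)) k) : ℚ) ≤
        (1 / k : ℚ) * (n.choose (k - 1)) := by
  haveI : NeZero n := ⟨by omega⟩
  set γ := dominationNumber (tokenGraph (⊤ : SimpleGraph (Fin n)) k) with hγdef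
  have hupN : k * γ ≤ n.choose (k - 1) := upper_main hk hkn
  -- the domination number is attained
  have hne : {m : ℕ | ∃ D : Finset {A : Finset (Fin n) // Finset.card A = k},
      IsDominatingSet (tokenGraph (⊤ : SimpleGraph (Fin n)) k) ↑D ∧ D.card = m}.Nonempty := by
    refine ⟨_, univ, fun v => Or.inl ?_, rfl⟩
    simp
  obtain ⟨D, hD, hDcard⟩ := Nat.sInf_mem hne
  have hγD : #D = γ := hDcard
  have hcount := counting_bound hD
  have hDpos : 0 < #D := by
    rcases Finset.eq_empty_or_nonempty D with rfl | ⟨A, hA⟩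
    · exfalso
      have hvpos : 0 < Fintype.card {A : Finset (Fin n) // Finset.card A = k} := by
        rw [Fintype.card_finset_len, Fintype.card_fin]
        exact Nat.choose_pos (by omega)
      obtain ⟨A⟩ := Fintype.card_pos_iff.mp hvpos
      rcases hD A with h | ⟨u, hu, _⟩
      · simp at h
      · simp at hu
    · exact card_pos.mpr ⟨A, hA⟩
  have hγpos : 0 < γ := hγD ▸ hDpos
  have hch : n.choose (k-1) * (n - (k-1)) = n.choose k * k := by
    have h := Nat.choose_succ_right_eq n (k-1)
    have hk1 : k - 1 + 1 = k := by omega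
    rw [hk1] at h
    exact h.symm
  have hcount' : n.choose k ≤ γ * (1 + k * (n - k)) := by
    rw [← hγD]
    calc n.choose k ≤ #D * (1 + k * (n-k)) := hcount
      _ = #D * (1 + k * (n-k)) := rfl
  have hlowN : n.choose (k-1) < k ^ 2 * γ := lower_arith hk hkn hγpos hch hcount'
  have hkQ : (0:ℚ) < (k:ℚ) := by exact_mod_cast (by omega : 0 < k)
  constructor
  · rw [div_mul_eq_mul_div, one_mul, div_lt_iff₀ (by positivity)]
    have : ((n.choose (k-1) : ℕ) : ℚ) < ((k ^ 2 * γ : ℕ) : ℚ) := by exact_mod_cast hlowN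
    push_cast at this
    linarith
  · rw [div_mul_eq_mul_div, one_mul, le_div_iff₀ hkQ]
    have : ((k * γ : ℕ) : ℚ) ≤ ((n.choose (k-1) : ℕ) : ℚ) := by exact_mod_cast hupN
    push_cast at this
    linarith
end

section
/- Let n and k be integers with 1 ≤ k ≤ n, and let A be a vertex of the k-token graph F_k(S_n), i.e., a k-element subset of {0,1,…,n}. If 0 ∈ A, then the degree of A in F_k(S_n) is n − k + 1; if 0 ∉ A, then the degree of A in F_k(S_n) is k. Consequently, if moreover 2k ≤ n + 1, the maximum degree of F_k(S_n) is n − k + 1. -/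
attribute [local instance] Classical.propDecidable

/-- In `F_k(Sₙ)`: a vertex containing the center `0` has degree `n - k + 1`, a
vertex not containing `0` has degree `k`; and if moreover `2k ≤ n + 1`, the
maximum degree of `F_k(Sₙ)` is `n - k + 1`. -/
theorem degrees_token_star (n k : ℕ) (hk : 1 ≤ k) (hkn : k ≤ n)
    (A : {A : Finset (Fin (n + 1)) // A.card = k}) :
    ((0 : Fin (n + 1)) ∈ A.1 → (tokenGraph (starGraph n) k).degree A = n - k + 1) ∧
    ((0 : Fin (n + 1)) ∉ A.1 → (tokenGraph (starGraph n) k).degree A = k) ∧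
    (2 * k ≤ n + 1 → (tokenGraph (starGraph n) k).maxDegree = n - k + 1) := by
  have hAdj : ∀ C B : {A : Finset (Fin (n + 1)) // A.card = k},
      (tokenGraph (starGraph n) k).Adj C B ↔
      ∃ v : Fin (n + 1), v ≠ 0 ∧ B.1 = symmDiff C.1 {0, v} := by
    intro C B
    constructor
    · rintro ⟨u, v, ⟨hne, h0⟩, hsd⟩
      have hB : B.1 = symmDiff C.1 {u, v} := by
        have := congrArg (fun s => symmDiff C.1 s) hsd
        simpa [symmDiff_symmDiff_cancel_left] using this
      rcases h0 with rfl | rfl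
      · exact ⟨v, Ne.symm hne, hB⟩
      · exact ⟨u, hne, by rw [hB, Finset.pair_comm]⟩
    · rintro ⟨v, hv, hB⟩
      exact ⟨0, v, ⟨Ne.symm hv, Or.inl rfl⟩,
        by rw [hB, symmDiff_symmDiff_cancel_left]⟩
  have hdeg : ∀ C : {A : Finset (Fin (n + 1)) // A.card = k},
      ((0 : Fin (n + 1)) ∈ C.1 → (tokenGraph (starGraph n) k).degree C = n - k + 1) ∧
      ((0 : Fin (n + 1)) ∉ C.1 → (tokenGraph (starGraph n) k).degree C = k) := by
    intro C
    constructor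
    · -- 0 ∈ C
      intro h0
      have hsd : ∀ v : Fin (n + 1), v ∉ C.1 →
          symmDiff C.1 {0, v} = insert v (C.1.erase 0) := by
        intro v hv
        ext x
        simp only [Finset.mem_symmDiff, Finset.mem_insert, Finset.mem_erase,
          Finset.mem_singleton]
        constructor
        · rintro (⟨hx, hne⟩ | ⟨(rfl | rfl), hx⟩)
          · push_neg at hne
            exact Or.inr ⟨hne.1, hx⟩
          · exact absurd h0 hx
          · exact Or.inl rfl
        · rintro (rfl | ⟨hne, hx⟩)
          · exact Or.inr ⟨Or.inr rfl, hv⟩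
          · exact Or.inl ⟨hx, by rintro (rfl | rfl); exact hne rfl; exact hv hx⟩
      have hcard : ∀ v : Fin (n + 1), v ∉ C.1 →
          (symmDiff C.1 {0, v}).card = k := by
        intro v hv
        rw [hsd v hv, Finset.card_insert_of_notMem
          (fun h => hv (Finset.mem_of_mem_erase h)),
          Finset.card_erase_of_mem h0, C.2]
        omega
      have key : (C.1ᶜ).card = ((tokenGraph (starGraph n) k).neighborFinset C).card := by
        refine Finset.card_bij
          (fun v hv => ⟨symmDiff C.1 {0, v}, hcard v (Finset.mem_compl.mp hv)⟩)
          ?_ ?_ ?_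
        · intro v hv
          rw [SimpleGraph.mem_neighborFinset, hAdj]
          have hv' := Finset.mem_compl.mp hv
          exact ⟨v, fun h => hv' (h ▸ h0), rfl⟩
        · intro a ha b hb hab
          have h1 : symmDiff C.1 {0, a} = symmDiff C.1 {0, b} :=
            congrArg Subtype.val hab
          have h2 : ({0, a} : Finset (Fin (n + 1))) = {0, b} :=
            symmDiff_right_injective C.1 h1
          have ha0 : a ≠ 0 := fun h => (Finset.mem_compl.mp ha) (h ▸ h0)
          have : a ∈ ({0, b} : Finset (Fin (n + 1))) := h2 ▸ Finset.mem_insert_of_mem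
            (Finset.mem_singleton_self a)
          rcases Finset.mem_insert.mp this with h | h
          · exact absurd h ha0
          · exact Finset.mem_singleton.mp h
        · intro B hB
          rw [SimpleGraph.mem_neighborFinset, hAdj] at hB
          obtain ⟨v, hv0, hBv⟩ := hB
          have hvC : v ∉ C.1 := by
            intro hvC
            have hsub : B.1 ⊂ C.1 := by
              constructor
              · intro x hx
                rw [hBv, Finset.mem_symmDiff] at hx
                rcases hx with ⟨hx, _⟩ | ⟨hx, hx'⟩
                · exact hx
                · rcases Finset.mem_insert.mp hx with rfl | hx
                  · exact absurd h0 hx'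
                  · exact absurd (Finset.mem_singleton.mp hx ▸ hvC) hx'
              · intro hsub
                have : (0 : Fin (n + 1)) ∈ B.1 := hsub h0
                rw [hBv, Finset.mem_symmDiff] at this
                rcases this with ⟨_, h⟩ | ⟨_, h⟩
                · exact h (Finset.mem_insert_self _ _)
                · exact h h0
            have := Finset.card_lt_card hsub
            rw [B.2, C.2] at this
            omega
          exact ⟨v, Finset.mem_compl.mpr hvC, Subtype.ext hBv.symm⟩
      rw [SimpleGraph.degree, ← key, Finset.card_compl, Fintype.card_fin, C.2]
      omega
    · -- 0 ∉ C
      intro h0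
      have hsd : ∀ v : Fin (n + 1), v ∈ C.1 →
          symmDiff C.1 {0, v} = insert 0 (C.1.erase v) := by
        intro v hv
        have hv0 : v ≠ 0 := fun h => h0 (h ▸ hv)
        ext x
        simp only [Finset.mem_symmDiff, Finset.mem_insert, Finset.mem_erase,
          Finset.mem_singleton]
        constructor
        · rintro (⟨hx, hne⟩ | ⟨(rfl | rfl), hx⟩)
          · push_neg at hne
            exact Or.inr ⟨hne.2, hx⟩
          · exact Or.inl rfl
          · exact absurd hv hx
        · rintro (rfl | ⟨hne, hx⟩)
          · exact Or.inr ⟨Or.inl rfl, h0⟩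
          · exact Or.inl ⟨hx, by rintro (rfl | rfl); exact h0 hx; exact hne rfl⟩
      have hcard : ∀ v : Fin (n + 1), v ∈ C.1 →
          (symmDiff C.1 {0, v}).card = k := by
        intro v hv
        rw [hsd v hv, Finset.card_insert_of_notMem
          (fun h => h0 (Finset.mem_of_mem_erase h)),
          Finset.card_erase_of_mem hv, C.2]
        omega
      have key : C.1.card = ((tokenGraph (starGraph n) k).neighborFinset C).card := by
        refine Finset.card_bij
          (fun v hv => ⟨symmDiff C.1 {0, v}, hcard v hv⟩) ?_ ?_ ?_
        · intro v hv
          rw [SimpleGraph.mem_neighborFinset, hAdj]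
          exact ⟨v, fun h => h0 (h ▸ hv), rfl⟩
        · intro a ha b hb hab
          have h1 : symmDiff C.1 {0, a} = symmDiff C.1 {0, b} :=
            congrArg Subtype.val hab
          have h2 : ({0, a} : Finset (Fin (n + 1))) = {0, b} :=
            symmDiff_right_injective C.1 h1
          have ha0 : a ≠ 0 := fun h => h0 (h ▸ ha)
          have : a ∈ ({0, b} : Finset (Fin (n + 1))) := h2 ▸ Finset.mem_insert_of_mem
            (Finset.mem_singleton_self a)
          rcases Finset.mem_insert.mp this with h | h
          · exact absurd h ha0
          · exact Finset.mem_singleton.mp h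
        · intro B hB
          rw [SimpleGraph.mem_neighborFinset, hAdj] at hB
          obtain ⟨v, hv0, hBv⟩ := hB
          have hvC : v ∈ C.1 := by
            by_contra hvC
            have hsub : C.1 ⊂ B.1 := by
              constructor
              · intro x hx
                rw [hBv, Finset.mem_symmDiff]
                refine Or.inl ⟨hx, ?_⟩
                rintro h
                rcases Finset.mem_insert.mp h with rfl | h
                · exact h0 hx
                · exact hvC (Finset.mem_singleton.mp h ▸ hx)
              · intro hsub
                have : (0 : Fin (n + 1)) ∈ B.1 := by
                  rw [hBv, Finset.mem_symmDiff]
                  exact Or.inr ⟨Finset.mem_insert_self _ _, h0⟩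
                exact h0 (hsub this)
            have := Finset.card_lt_card hsub
            rw [B.2, C.2] at this
            omega
          exact ⟨v, hvC, Subtype.ext hBv.symm⟩
      rw [SimpleGraph.degree, ← key, C.2]
  refine ⟨(hdeg A).1, (hdeg A).2, ?_⟩
  intro h2k
  apply le_antisymm
  · apply SimpleGraph.maxDegree_le_of_forall_degree_le
    intro B
    by_cases hB : (0 : Fin (n + 1)) ∈ B.1
    · rw [(hdeg B).1 hB]
    · rw [(hdeg B).2 hB]; omega
  · have hcard : (Finset.image (Fin.castLE (by omega : k ≤ n + 1))
        (Finset.univ : Finset (Fin k))).card = k := by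
      rw [Finset.card_image_of_injective _ (Fin.castLE_injective _), Finset.card_univ,
        Fintype.card_fin]
    set A₀ : {A : Finset (Fin (n + 1)) // A.card = k} := ⟨_, hcard⟩ with hA₀
    have h0 : (0 : Fin (n + 1)) ∈ A₀.1 := by
      rw [hA₀]
      refine Finset.mem_image.mpr ⟨⟨0, by omega⟩, Finset.mem_univ _, ?_⟩
      rfl
    have := (hdeg A₀).1 h0
    calc n - k + 1 = (tokenGraph (starGraph n) k).degree A₀ := this.symm
      _ ≤ _ := SimpleGraph.degree_le_maxDegree _ _
end
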